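/- (A new quadratic transformation for ₃F₂.) Let a, b be complex numbers such that (a+b+1)/2 is not zero or a negative integer. Then there exists ε > 0 such that for every complex w with |w| < ε, ₃F₂(a, b, 1; 2, (a+b+1)/2; w) = (1−w) · ₃F₂((a+1)/2, (b+1)/2, 1; 2, (a+b+1)/2; 4w(1−w)). -/

import Mathlib

open scoped BigOperators

/-- Rising factorial (Pochhammer symbol) `(x)_k = x(x+1)⋯(x+k-1)`. -/
noncomputable def pochC (x : ℂ) (k : ℕ) : ℂ := ∏ i ∈ Finset.range k, (x + i)

/-- The generalized hypergeometric series `₃F₂(a₁,a₂,a₃;b₁,b₂;z)`. -/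
noncomputable def F32 (a₁ a₂ a₃ b₁ b₂ z : ℂ) : ℂ :=
  ∑' k : ℕ, pochC a₁ k * pochC a₂ k * pochC a₃ k /
      (pochC b₁ k * pochC b₂ k * (Nat.factorial k : ℂ)) * z ^ k

namespace S5
noncomputable def Phi (a b : ℂ) (k : ℕ) : ℂ :=
  4^k * pochC ((a+1)/2) k * pochC ((b+1)/2) k /
    ((Nat.factorial (k+1) : ℂ) * pochC ((a+b+1)/2) k)
noncomputable def al (a b : ℂ) (n k : ℕ) : ℂ :=
  (k:ℂ)*((n:ℂ)-2*k) + ((a+b)*((n:ℂ)-2*(k:ℂ)-1) - ((n:ℂ)-1))/2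
noncomputable def be (a b : ℂ) (k : ℕ) : ℂ := ((k:ℂ)+1)*(a+b+2*(k:ℂ)-1)/2
noncomputable def Xc (n k : ℕ) : ℂ := if k ≤ n then ((k+1).choose (n-k) : ℂ) else 0
noncomputable def Yc (n k : ℕ) : ℂ := if k ≤ n+1 then ((k+1).choose (n+1-k) : ℂ) else 0
noncomputable def Gc (a b : ℂ) (n k : ℕ) : ℂ :=
  (-1:ℂ)^(n+k) * Phi a b k * (al a b n k * Xc n k + be a b k * Yc n k)
noncomputable def Sc (a b : ℂ) (n : ℕ) : ℂ :=
  ∑ k ∈ Finset.range (n+1), (-1:ℂ)^(n+k) * ((k+1).choose (n-k) : ℂ) * Phi a b k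

lemma KIp (a b : ℂ) (n k : ℕ) :
    ((k:ℂ)+2)*((a+b+1)/2+(k:ℂ)) *
      ((al a b n k - (a+(n:ℂ))*(b+(n:ℂ)))*Xc n k
        + (be a b k - ((n:ℂ)+2)*((a+b+1)/2+(n:ℂ)))*Yc n k)
    + (a+1+2*(k:ℂ))*(b+1+2*(k:ℂ)) *
      (al a b n (k+1) * Xc n (k+1) + be a b (k+1) * Yc n (k+1)) = 0 := by
  rcases le_or_gt (n+2) k with hk | hk
  · have hx : Xc n k = 0 := by simp [Xc]; omega
    have hy : Yc n k = 0 := by simp [Yc]; omega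
    have hx1 : Xc n (k+1) = 0 := by simp [Xc]; omega
    have hy1 : Yc n (k+1) = 0 := by simp [Yc]; omega
    rw [hx, hy, hx1, hy1]; ring
  rcases eq_or_lt_of_le (Nat.lt_succ_iff.mp hk) with hk1 | hk1
  · -- k = n+1
    subst hk1
    have hx : Xc n (n+1) = 0 := by simp [Xc]
    have hy : Yc n (n+1) = 1 := by simp [Yc, Nat.sub_self]
    have hx1 : Xc n (n+2) = 0 := by simp [Xc]
    have hy1 : Yc n (n+2) = 0 := by simp [Yc]
    rw [hx, hy, hx1, hy1]
    simp only [al, be]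
    push_cast
    ring
  -- now k ≤ n
  have hkn : k ≤ n := by omega
  rcases le_or_gt (2*k+4) n with h2 | h2
  · -- n ≥ 2k+4
    have hx : Xc n k = 0 := by
      simp only [Xc, if_pos hkn]
      rw [Nat.choose_eq_zero_of_lt (by omega)]; norm_num
    have hy : Yc n k = 0 := by
      simp only [Yc, if_pos (by omega : k ≤ n+1)]
      rw [Nat.choose_eq_zero_of_lt (by omega)]; norm_num
    have hx1 : Xc n (k+1) = 0 := by
      simp only [Xc, if_pos (by omega : k+1 ≤ n)]
      rw [Nat.choose_eq_zero_of_lt (by omega)]; norm_num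
    have hy1 : Yc n (k+1) = 0 := by
      simp only [Yc, if_pos (by omega : k+1 ≤ n+1)]
      rw [Nat.choose_eq_zero_of_lt (by omega)]; norm_num
    rw [hx, hy, hx1, hy1]; ring
  rcases eq_or_lt_of_le (by omega : n ≤ 2*k+3) with h3 | h3
  · -- n = 2k+3
    have hx : Xc n k = 0 := by
      simp only [Xc, if_pos hkn]
      rw [Nat.choose_eq_zero_of_lt (by omega)]; norm_num
    have hy : Yc n k = 0 := by
      simp only [Yc, if_pos (by omega : k ≤ n+1)]
      rw [Nat.choose_eq_zero_of_lt (by omega)]; norm_num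
    have hy1 : Yc n (k+1) = 0 := by
      simp only [Yc, if_pos (by omega : k+1 ≤ n+1)]
      rw [Nat.choose_eq_zero_of_lt (by omega)]; norm_num
    have hx1 : Xc n (k+1) = 1 := by
      simp only [Xc, if_pos (by omega : k+1 ≤ n)]
      have : n - (k+1) = k+2 := by omega
      rw [this, Nat.choose_self]; norm_num
    rw [hx, hy, hx1, hy1]
    have hn : (n:ℂ) = 2*(k:ℂ)+3 := by rw [h3]; push_cast; ring
    simp only [al, be, hn]
    push_cast
    ring
  rcases eq_or_lt_of_le (by omega : n ≤ 2*k+2) with h4 | h4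
  · -- n = 2k+2
    have hx : Xc n k = 0 := by
      simp only [Xc, if_pos hkn]
      rw [Nat.choose_eq_zero_of_lt (by omega)]; norm_num
    have hy : Yc n k = 0 := by
      simp only [Yc, if_pos (by omega : k ≤ n+1)]
      rw [Nat.choose_eq_zero_of_lt (by omega)]; norm_num
    have hx1 : Xc n (k+1) = (k:ℂ)+2 := by
      simp only [Xc, if_pos (by omega : k+1 ≤ n)]
      have : n - (k+1) = k+1 := by omega
      rw [this, Nat.choose_succ_self_right]; push_cast; ring
    have hy1 : Yc n (k+1) = 1 := by
      simp only [Yc, if_pos (by omega : k+1 ≤ n+1)]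
      have : n + 1 - (k+1) = k+2 := by omega
      rw [this, Nat.choose_self]; norm_num
    rw [hx, hy, hx1, hy1]
    have hn : (n:ℂ) = 2*(k:ℂ)+2 := by rw [h4]; push_cast; ring
    simp only [al, be, hn]
    push_cast
    ring
  -- now k ≤ n ≤ 2k+1
  rcases eq_or_lt_of_le hkn with hnk | hnk
  · -- n = k
    subst hnk
    have hx : Xc k k = 1 := by
      simp only [Xc, if_pos (le_refl k), Nat.sub_self, Nat.choose_zero_right]; norm_num
    have hy : Yc k k = (k:ℂ)+1 := by
      simp only [Yc, if_pos (by omega : k ≤ k+1)]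
      have : k + 1 - k = 1 := by omega
      rw [this, Nat.choose_one_right]; push_cast; ring
    have hx1 : Xc k (k+1) = 0 := by simp [Xc]
    have hy1 : Yc k (k+1) = 1 := by
      simp only [Yc, if_pos (le_refl (k+1)), Nat.sub_self, Nat.choose_zero_right]; norm_num
    rw [hx, hy, hx1, hy1]
    simp only [al, be]
    push_cast
    ring
  · -- k+1 ≤ n ≤ 2k+1
    obtain ⟨i, rfl⟩ : ∃ i, n = k+1+i := ⟨n-(k+1), by omega⟩
    have hik : i ≤ k := by omega
    set u1 : ℂ := ((k+1).choose (i+1) : ℂ) with hu1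
    have hz1 : (k:ℂ)+1-(i:ℂ) ≠ 0 := by
      have h' : ((k+1-i : ℕ) : ℂ) = (k:ℂ)+1-(i:ℂ) := by
        push_cast [Nat.cast_sub (by omega : i ≤ k+1)]; ring
      rw [← h']
      have h2 : (k+1-i : ℕ) ≠ 0 := by omega
      exact Nat.cast_ne_zero.mpr h2
    have hz2 : (i:ℂ)+2 ≠ 0 := by
      have h2 : ((i+2 : ℕ) : ℂ) ≠ 0 := Nat.cast_ne_zero.mpr (by omega)
      push_cast at h2; exact h2
    have hz3 : (k:ℂ)+2-(i:ℂ) ≠ 0 := by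
      have h' : ((k+2-i : ℕ) : ℂ) = (k:ℂ)+2-(i:ℂ) := by
        push_cast [Nat.cast_sub (by omega : i ≤ k+2)]; ring
      rw [← h']
      have h2 : (k+2-i : ℕ) ≠ 0 := by omega
      exact Nat.cast_ne_zero.mpr h2
    -- u0 in terms of u1
    have e1 : ((i:ℂ)+1)*u1 = ((k:ℂ)+1-(i:ℂ))*((k+1).choose i : ℂ) := by
      have := Nat.choose_succ_right_eq (k+1) i
      have hc : (((k+1).choose (i+1) * (i+1) : ℕ) : ℂ) = (((k+1).choose i * (k+1-i) : ℕ) : ℂ) := by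
        exact_mod_cast congrArg (Nat.cast : ℕ → ℂ) this
      push_cast [Nat.cast_sub (by omega : i ≤ k+1)] at hc
      rw [hu1]; linear_combination hc
    have hx : Xc (k+1+i) k = u1 := by
      simp only [Xc, if_pos (by omega : k ≤ k+1+i)]
      have h1 : k+1+i-k = i+1 := by omega
      rw [h1, hu1]
    have hy : Yc (k+1+i) k = ((k:ℂ)-(i:ℂ))*u1/((i:ℂ)+2) := by
      simp only [Yc, if_pos (by omega : k ≤ k+1+i+1)]
      have h1 : k+1+i+1-k = i+2 := by omega
      rw [h1]
      have h2 := Nat.choose_succ_right_eq (k+1) (i+1)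
      have h3 : k+1-(i+1) = k-i := by omega
      rw [h3] at h2
      have hc := congrArg (Nat.cast : ℕ → ℂ) h2
      push_cast [Nat.cast_sub hik] at hc
      rw [eq_div_iff hz2, hu1]
      linear_combination hc
    have hv1 : (((k+2).choose (i+1) : ℕ) : ℂ) = ((k:ℂ)+2)*u1/((k:ℂ)+1-(i:ℂ)) := by
      have e3 : (((k+2).choose (i+1) : ℕ) : ℂ) = (((k+1).choose i : ℕ) : ℂ) + u1 := by
        rw [hu1]
        exact_mod_cast congrArg (Nat.cast : ℕ → ℂ) (Nat.choose_succ_succ (k+1) i)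
      rw [e3, eq_div_iff hz1]
      linear_combination -e1
    have hv1' : (((k+2).choose (i+1) : ℕ) : ℂ) * ((k:ℂ)+1-(i:ℂ)) = ((k:ℂ)+2)*u1 := by
      rw [hv1]; field_simp
    have hy1 : Yc (k+1+i) (k+1) = ((k:ℂ)+2)*u1/((k:ℂ)+1-(i:ℂ)) := by
      simp only [Yc, if_pos (by omega : k+1 ≤ k+1+i+1)]
      have h1 : k+1+i+1-(k+1) = i+1 := by omega
      rw [h1, hv1]
    have hx1 : Xc (k+1+i) (k+1)
        = ((i:ℂ)+1)*((k:ℂ)+2)*u1/(((k:ℂ)+2-(i:ℂ))*((k:ℂ)+1-(i:ℂ))) := by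
      simp only [Xc, if_pos (by omega : k+1 ≤ k+1+i)]
      have h1 : k+1+i-(k+1) = i := by omega
      rw [h1, (by omega : k+1+1 = k+2)]
      have h2 := Nat.choose_succ_right_eq (k+2) i
      have e4 : (((k+2).choose (i+1) : ℕ) : ℂ) * ((i:ℂ)+1)
          = (((k+2).choose i : ℕ) : ℂ) * ((k:ℂ)+2-(i:ℂ)) := by
        have hc := congrArg (Nat.cast : ℕ → ℂ) h2
        push_cast [Nat.cast_sub (by omega : i ≤ k+2)] at hc
        linear_combination hc
      rw [eq_div_iff (mul_ne_zero hz3 hz1)]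
      linear_combination (-((k:ℂ)+1-(i:ℂ)))*e4 + ((i:ℂ)+1)*hv1'
    rw [hx, hy, hx1, hy1]
    simp only [al, be]
    push_cast
    field_simp
    ring


variable {a b : ℂ}

lemma pochC_succ (x : ℂ) (k : ℕ) : pochC x (k+1) = pochC x k * (x + k) :=
  Finset.prod_range_succ _ _

lemma pochC_c_ne (hc : ∀ m : ℕ, (a+b+1)/2 + (m:ℂ) ≠ 0) (k : ℕ) :
    pochC ((a+b+1)/2) k ≠ 0 :=
  Finset.prod_ne_zero_iff.mpr fun i _ => hc i

lemma PhiRec (hc : ∀ m : ℕ, (a+b+1)/2 + (m:ℂ) ≠ 0) (k : ℕ) :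
    Phi a b (k+1) * (((k:ℂ)+2) * ((a+b+1)/2+(k:ℂ)))
      = Phi a b k * ((a+1+2*(k:ℂ))*(b+1+2*(k:ℂ))) := by
  have hD1 : ((Nat.factorial (k+1+1) : ℕ) : ℂ) * pochC ((a+b+1)/2) (k+1) ≠ 0 :=
    mul_ne_zero (Nat.cast_ne_zero.mpr (Nat.factorial_ne_zero _)) (pochC_c_ne hc (k+1))
  have hD2 : ((Nat.factorial (k+1) : ℕ) : ℂ) * pochC ((a+b+1)/2) k ≠ 0 :=
    mul_ne_zero (Nat.cast_ne_zero.mpr (Nat.factorial_ne_zero _)) (pochC_c_ne hc k)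
  unfold Phi
  rw [div_mul_eq_mul_div, div_mul_eq_mul_div, div_eq_div_iff hD1 hD2]
  rw [pochC_succ ((a+1)/2), pochC_succ ((b+1)/2), pochC_succ ((a+b+1)/2),
    Nat.factorial_succ (k+1)]
  push_cast
  ring

lemma KI (hc : ∀ m : ℕ, (a+b+1)/2 + (m:ℂ) ≠ 0) (n k : ℕ) (hk : k ≤ n+1) :
    ((n:ℂ)+2)*((a+b+1)/2+(n:ℂ)) * ((-1:ℂ)^(n+1+k) * ((k+1).choose (n+1-k) : ℂ) * Phi a b k)
      - (a+(n:ℂ))*(b+(n:ℂ)) *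
        (if k ≤ n then (-1:ℂ)^(n+k) * ((k+1).choose (n-k) : ℂ) * Phi a b k else 0)
    = Gc a b n (k+1) - Gc a b n k := by
  have hnz : ((k:ℂ)+2)*((a+b+1)/2+(k:ℂ)) ≠ 0 := by
    refine mul_ne_zero ?_ (hc k)
    have : ((k+2 : ℕ) : ℂ) ≠ 0 := Nat.cast_ne_zero.mpr (by omega)
    push_cast at this; exact this
  have key := KIp a b n k
  have hrec := PhiRec hc k
  have hYk : ((k+1).choose (n+1-k) : ℂ) = Yc n k := by rw [Yc, if_pos hk]
  have hIf : (if k ≤ n then (-1:ℂ)^(n+k) * ((k+1).choose (n-k) : ℂ) * Phi a b k else 0)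
      = (-1:ℂ)^(n+k) * Phi a b k * Xc n k := by
    rw [Xc]; split <;> ring
  rw [hYk, hIf]
  have main : (((k:ℂ)+2)*((a+b+1)/2+(k:ℂ))) *
      ((((n:ℂ)+2)*((a+b+1)/2+(n:ℂ)) * ((-1:ℂ)^(n+1+k) * Yc n k * Phi a b k)
        - (a+(n:ℂ))*(b+(n:ℂ)) * ((-1:ℂ)^(n+k) * Phi a b k * Xc n k))
       - (Gc a b n (k+1) - Gc a b n k)) = 0 := by
    simp only [Gc]
    linear_combination ((-1:ℂ))^(n+k) * Phi a b k * key
      + ((-1:ℂ))^(n+k) * (al a b n (k+1) * Xc n (k+1) + be a b (k+1) * Yc n (k+1)) * hrec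
  have := (mul_eq_zero.mp main).resolve_left hnz
  exact sub_eq_zero.mp this

variable {a b : ℂ}

lemma Gc_zero (a b : ℂ) (n : ℕ) : Gc a b n 0 = 0 := by
  match n with
  | 0 =>
    have h1 : al a b 0 0 * Xc 0 0 + be a b 0 * Yc 0 0 = 0 := by
      simp only [al, be, Xc, Yc]
      norm_num [Nat.choose]
      ring
    rw [Gc, h1, mul_zero]
  | 1 =>
    have h1 : al a b 1 0 * Xc 1 0 + be a b 0 * Yc 1 0 = 0 := by
      simp only [al, be, Xc, Yc]
      norm_num [Nat.choose]
    rw [Gc, h1, mul_zero]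
  | (m+2) =>
    have hx : Xc (m+2) 0 = 0 := by
      simp only [Xc, if_pos (by omega : 0 ≤ m+2)]
      rw [Nat.choose_eq_zero_of_lt (by omega)]; norm_num
    have hy : Yc (m+2) 0 = 0 := by
      simp only [Yc, if_pos (by omega : 0 ≤ m+3)]
      rw [Nat.choose_eq_zero_of_lt (by omega)]; norm_num
    rw [Gc, hx, hy]; ring

lemma Gc_end (a b : ℂ) (n : ℕ) : Gc a b n (n+2) = 0 := by
  have hx : Xc n (n+2) = 0 := by simp [Xc]
  have hy : Yc n (n+2) = 0 := by simp [Yc]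
  rw [Gc, hx, hy]; ring

lemma comb (hc : ∀ m : ℕ, (a+b+1)/2 + (m:ℂ) ≠ 0) :
    ∀ n, Sc a b n * ((Nat.factorial (n+1) : ℂ) * pochC ((a+b+1)/2) n)
      = pochC a n * pochC b n := by
  intro n
  induction n with
  | zero =>
    simp [Sc, Phi, pochC]
  | succ n ih =>
    have tele : ∑ k ∈ Finset.range (n+2), (Gc a b n (k+1) - Gc a b n k)
        = Gc a b n (n+2) - Gc a b n 0 := Finset.sum_range_sub (fun k => Gc a b n k) (n+2)
    have hsum : ∑ k ∈ Finset.range (n+2),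
        (((n:ℂ)+2)*((a+b+1)/2+(n:ℂ)) *
          ((-1:ℂ)^(n+1+k) * ((k+1).choose (n+1-k) : ℂ) * Phi a b k)
        - (a+(n:ℂ))*(b+(n:ℂ)) *
          (if k ≤ n then (-1:ℂ)^(n+k) * ((k+1).choose (n-k) : ℂ) * Phi a b k else 0))
        = 0 := by
      rw [Finset.sum_congr rfl (fun k hk => KI hc n k (by
        have := Finset.mem_range.mp hk; omega))]
      rw [tele, Gc_zero, Gc_end]; ring
    rw [Finset.sum_sub_distrib, ← Finset.mul_sum, ← Finset.mul_sum] at hsum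
    have hS1 : ∑ k ∈ Finset.range (n+2),
        ((-1:ℂ)^(n+1+k) * ((k+1).choose (n+1-k) : ℂ) * Phi a b k) = Sc a b (n+1) := rfl
    have hS0 : ∑ k ∈ Finset.range (n+2),
        (if k ≤ n then (-1:ℂ)^(n+k) * ((k+1).choose (n-k) : ℂ) * Phi a b k else 0)
        = Sc a b n := by
      rw [← Finset.sum_subset (Finset.range_subset_range.mpr (by omega : n+1 ≤ n+2))
        (fun x _ hx => by
          rw [if_neg]; intro hxn; exact hx (Finset.mem_range.mpr (by omega)))]
      exact Finset.sum_congr rfl fun k hk => if_pos (by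
        have := Finset.mem_range.mp hk; omega)
    rw [hS1, hS0] at hsum
    -- now: (n+2)(c+n) * Sc (n+1) - (a+n)(b+n) * Sc n = 0
    rw [pochC_succ a, pochC_succ b, pochC_succ ((a+b+1)/2), Nat.factorial_succ (n+1)]
    push_cast
    push_cast at ih
    linear_combination (((Nat.factorial (n+1) : ℕ) : ℂ) * pochC ((a+b+1)/2) n) * hsum
      + ((a+(n:ℂ))*(b+(n:ℂ))) * ih


lemma poch_one : ∀ n : ℕ, pochC 1 n = (n.factorial : ℂ) := by
  intro n
  induction n with
  | zero => simp [pochC]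
  | succ n ih =>
    simp only [pochC] at ih ⊢
    rw [Finset.prod_range_succ, ih, Nat.factorial_succ]
    push_cast; ring

lemma poch_two : ∀ n : ℕ, pochC 2 n = ((n+1).factorial : ℂ) := by
  intro n
  induction n with
  | zero => simp [pochC]
  | succ n ih =>
    simp only [pochC] at ih ⊢
    rw [Finset.prod_range_succ, ih, Nat.factorial_succ (n+1)]
    push_cast; ring

lemma tsum_prod_antidiag {F : ℕ × ℕ → ℂ} (h : Summable F) :
    ∑' p : ℕ × ℕ, F p = ∑' n : ℕ, ∑ kl ∈ Finset.HasAntidiagonal.antidiagonal n, F kl := by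
  rw [← Finset.HasAntidiagonal.sigmaAntidiagonalEquivProd.tsum_eq F]
  have hs : Summable fun c : (Σ n : ℕ, {x // x ∈ Finset.HasAntidiagonal.antidiagonal n}) =>
      F (Finset.HasAntidiagonal.sigmaAntidiagonalEquivProd c) :=
    Finset.HasAntidiagonal.sigmaAntidiagonalEquivProd.summable_iff.mpr h
  rw [Summable.tsum_sigma' (fun n => (hasSum_fintype _).summable) hs]
  refine tsum_congr fun n => ?_
  rw [tsum_fintype]
  exact Finset.sum_coe_sort (Finset.HasAntidiagonal.antidiagonal n) F

lemma rownorm {w : ℂ} (k j : ℕ) :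
    ‖Phi a b k * (-1:ℂ)^j * ((k+1).choose j : ℂ) * w^(k+j)‖
      = ‖Phi a b k‖ * (((k+1).choose j : ℝ) * (‖w‖^j)) * ‖w‖^k := by
  rw [norm_mul, norm_mul, norm_mul, norm_pow, norm_pow, norm_neg, norm_one, one_pow,
    pow_add]
  rw [Complex.norm_natCast]
  ring

lemma rowvanish {w : ℂ} (k : ℕ) : ∀ j ∉ Finset.range (k+2),
    Phi a b k * (-1:ℂ)^j * ((k+1).choose j : ℂ) * w^(k+j) = 0 := by
  intro j hj
  have h2 : k+2 ≤ j := by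
    by_contra h
    exact hj (Finset.mem_range.mpr (by omega))
  rw [Nat.choose_eq_zero_of_lt (by omega)]
  simp

lemma rowsum {w : ℂ} (k : ℕ) :
    ∑' j : ℕ, ‖Phi a b k * (-1:ℂ)^j * ((k+1).choose j : ℂ) * w^(k+j)‖
      = ‖Phi a b k‖ * ‖w‖^k * (‖w‖+1)^(k+1) := by
  rw [tsum_eq_sum (s := Finset.range (k+2))
    (fun j hj => by rw [rowvanish k j hj, norm_zero])]
  rw [add_pow ‖w‖ 1 (k+1), Finset.mul_sum]
  refine Finset.sum_congr rfl fun j hj => ?_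
  rw [rownorm]
  simp only [one_pow, mul_one]
  ring

lemma gsummable (hc : ∀ m : ℕ, (a+b+1)/2 + (m:ℂ) ≠ 0) {w : ℂ} (hw : ‖w‖ < 1/100) :
    Summable (fun p : ℕ × ℕ =>
      Phi a b p.1 * (-1:ℂ)^p.2 * ((p.1+1).choose p.2 : ℂ) * w^(p.1+p.2)) := by
  set f : ℕ → ℝ := fun k => ‖Phi a b k‖ * ‖w‖^k * (‖w‖+1)^(k+1) with hf
  have hW0 : (0:ℝ) ≤ ‖w‖ := norm_nonneg w
  have hfs : Summable f := by
    apply summable_of_ratio_norm_eventually_le (r := 1/2) (by norm_num)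
    rw [Filter.eventually_atTop]
    set c : ℂ := (a+b+1)/2 with hcdef
    refine ⟨⌈2*(‖a‖+‖b‖+‖c‖)⌉₊ + 4, fun k hk => ?_⟩
    have hkR : (2*(‖a‖+‖b‖+‖c‖)+4 : ℝ) ≤ (k:ℝ) := by
      have h1 : (⌈2*(‖a‖+‖b‖+‖c‖)⌉₊ : ℝ) + 4 ≤ (k:ℝ) := by exact_mod_cast hk
      have h2 := Nat.le_ceil (2*(‖a‖+‖b‖+‖c‖))
      linarith
    have hD : ‖Phi a b (k+1)‖ * ‖((k:ℂ)+2)*(c+(k:ℂ))‖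
        = ‖Phi a b k‖ * ‖(a+1+2*(k:ℂ))*(b+1+2*(k:ℂ))‖ := by
      rw [← norm_mul, ← norm_mul, PhiRec hc k]
    have hDpos : 0 < ‖((k:ℂ)+2)*(c+(k:ℂ))‖ := by
      rw [norm_pos_iff]
      refine mul_ne_zero ?_ (hc k)
      have : ((k+2:ℕ):ℂ) ≠ 0 := Nat.cast_ne_zero.mpr (by omega)
      push_cast at this; exact this
    -- bounds
    have hNa : ‖a+1+2*(k:ℂ)‖ ≤ ‖a‖ + (1+2*(k:ℝ)) := by
      have h1 : ‖a+1+2*(k:ℂ)‖ ≤ ‖a‖ + ‖(1:ℂ)+2*(k:ℂ)‖ := by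
        rw [add_assoc]; exact norm_add_le _ _
      have h2 : ‖(1:ℂ)+2*(k:ℂ)‖ = 1+2*(k:ℝ) := by
        have : ((1+2*k : ℕ) : ℂ) = (1:ℂ)+2*(k:ℂ) := by push_cast; ring
        rw [← this, Complex.norm_natCast]; push_cast; ring
      linarith
    have hNb : ‖b+1+2*(k:ℂ)‖ ≤ ‖b‖ + (1+2*(k:ℝ)) := by
      have h1 : ‖b+1+2*(k:ℂ)‖ ≤ ‖b‖ + ‖(1:ℂ)+2*(k:ℂ)‖ := by
        rw [add_assoc]; exact norm_add_le _ _
      have h2 : ‖(1:ℂ)+2*(k:ℂ)‖ = 1+2*(k:ℝ) := by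
        have : ((1+2*k : ℕ) : ℂ) = (1:ℂ)+2*(k:ℂ) := by push_cast; ring
        rw [← this, Complex.norm_natCast]; push_cast; ring
      linarith
    have hNc : (k:ℝ) - ‖c‖ ≤ ‖c+(k:ℂ)‖ := by
      have h1 : ‖(k:ℂ)‖ - ‖-c‖ ≤ ‖(k:ℂ) - (-c)‖ := norm_sub_norm_le _ _
      rw [sub_neg_eq_add, norm_neg] at h1
      have h2 : ‖(k:ℂ)‖ = (k:ℝ) := Complex.norm_natCast k
      have h3 : (k:ℂ) + c = c + (k:ℂ) := by ring
      rw [h2, h3] at h1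
      exact h1
    -- the key numeric inequality
    have hkey : ‖(a+1+2*(k:ℂ))*(b+1+2*(k:ℂ))‖ * (‖w‖*(‖w‖+1))
        ≤ (1/2) * ‖((k:ℂ)+2)*(c+(k:ℂ))‖ := by
      rw [norm_mul, norm_mul]
      have hnk : ‖((k:ℂ)+2)‖ = (k:ℝ)+2 := by
        have : ((k+2:ℕ):ℂ) = (k:ℂ)+2 := by push_cast; ring
        rw [← this, Complex.norm_natCast]; push_cast; ring
      rw [hnk]
      have hq : ‖w‖*(‖w‖+1) ≤ 1/50 := by nlinarith
      have hA0 := norm_nonneg a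
      have hB0 := norm_nonneg b
      have hC0 := norm_nonneg c
      have hNa0 := norm_nonneg (a+1+2*(k:ℂ))
      have hNb0 := norm_nonneg (b+1+2*(k:ℂ))
      nlinarith [mul_le_mul hNa hNb hNb0 (by linarith : (0:ℝ) ≤ ‖a‖+(1+2*(k:ℝ))),
        mul_le_mul_of_nonneg_left hNc (by linarith : (0:ℝ) ≤ (k:ℝ)+2),
        mul_le_mul (le_refl ((‖a‖+(1+2*(k:ℝ)))*(‖b‖+(1+2*(k:ℝ))))) hq
          (by nlinarith) (by nlinarith),
        mul_nonneg hNa0 hNb0]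
    -- conclude ratio step
    have hfk1 : f (k+1) * ‖((k:ℂ)+2)*(c+(k:ℂ))‖
        ≤ ((1/2) * f k) * ‖((k:ℂ)+2)*(c+(k:ℂ))‖ := by
      have e1 : f (k+1) * ‖((k:ℂ)+2)*(c+(k:ℂ))‖
          = (‖Phi a b k‖ * ‖w‖^k * (‖w‖+1)^(k+1))
            * (‖(a+1+2*(k:ℂ))*(b+1+2*(k:ℂ))‖ * (‖w‖*(‖w‖+1))) := by
        simp only [hf]
        rw [show ‖Phi a b (k+1)‖ * ‖w‖^(k+1) * (‖w‖+1)^(k+1+1) * ‖((k:ℂ)+2)*(c+(k:ℂ))‖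
            = (‖Phi a b (k+1)‖ * ‖((k:ℂ)+2)*(c+(k:ℂ))‖) * (‖w‖^(k+1) * (‖w‖+1)^(k+2))
            from by ring, hD]
        ring
      rw [e1]
      have hfk0 : (0:ℝ) ≤ ‖Phi a b k‖ * ‖w‖^k * (‖w‖+1)^(k+1) := by positivity
      calc (‖Phi a b k‖ * ‖w‖^k * (‖w‖+1)^(k+1))
            * (‖(a+1+2*(k:ℂ))*(b+1+2*(k:ℂ))‖ * (‖w‖*(‖w‖+1)))
          ≤ (‖Phi a b k‖ * ‖w‖^k * (‖w‖+1)^(k+1))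
            * ((1/2) * ‖((k:ℂ)+2)*(c+(k:ℂ))‖) :=
            mul_le_mul_of_nonneg_left hkey hfk0
        _ = ((1/2) * f k) * ‖((k:ℂ)+2)*(c+(k:ℂ))‖ := by simp only [hf]; ring
    have hstep := le_of_mul_le_mul_right hfk1 hDpos
    have hfpos : 0 ≤ f k := by simp only [hf]; positivity
    have hfpos1 : 0 ≤ f (k+1) := by simp only [hf]; positivity
    rw [Real.norm_eq_abs, Real.norm_eq_abs, abs_of_nonneg hfpos1, abs_of_nonneg hfpos]
    exact hstep
  -- assemble
  apply Summable.of_norm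
  rw [summable_prod_of_nonneg (fun p => norm_nonneg _)]
  constructor
  · intro k
    exact summable_of_ne_finset_zero (s := Finset.range (k+2))
      (fun j hj => by rw [rowvanish k j hj, norm_zero])
  · apply Summable.congr hfs
    intro k
    exact (rowsum k).symm

end S5

/-- A new quadratic transformation for `₃F₂` (one unit upper parameter). -/
theorem stmt5 (a b : ℂ)
    (h : ∀ n : ℕ, (a + b + 1) / 2 ≠ -(n : ℂ)) :
    ∃ ε > 0, ∀ w : ℂ, ‖w‖ < ε →
      F32 a b 1 2 ((a + b + 1) / 2) w
        = (1 - w) *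
          F32 ((a + 1) / 2) ((b + 1) / 2) 1 2 ((a + b + 1) / 2) (4 * w * (1 - w)) := by
  classical
  have hc : ∀ m : ℕ, (a+b+1)/2 + (m:ℂ) ≠ 0 := by
    intro m hm
    exact h m (by linear_combination hm)
  refine ⟨1/100, by norm_num, fun w hw => ?_⟩
  have hw' : ‖w‖ < 1/100 := hw
  have hpc : ∀ n : ℕ, pochC ((a+b+1)/2) n ≠ 0 := S5.pochC_c_ne hc
  have hfac : ∀ n : ℕ, ((n.factorial : ℕ) : ℂ) ≠ 0 :=
    fun n => Nat.cast_ne_zero.mpr n.factorial_ne_zero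
  have hSc : ∀ n : ℕ, S5.Sc a b n
      = pochC a n * pochC b n / (((n+1).factorial : ℂ) * pochC ((a+b+1)/2) n) := by
    intro n
    rw [eq_div_iff (mul_ne_zero (hfac (n+1)) (hpc n))]
    exact S5.comb hc n
  have hg := S5.gsummable hc hw'
  -- LHS rewrite
  have hL : F32 a b 1 2 ((a+b+1)/2) w = ∑' n : ℕ, S5.Sc a b n * w^n := by
    rw [F32]
    refine tsum_congr fun n => ?_
    rw [S5.poch_one, S5.poch_two, hSc n]
    have e : pochC a n * pochC b n * (n.factorial : ℂ)
          / (((n+1).factorial : ℂ) * pochC ((a+b+1)/2) n * (n.factorial : ℂ))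
        = pochC a n * pochC b n / (((n+1).factorial : ℂ) * pochC ((a+b+1)/2) n) := by
      rw [div_eq_div_iff
        (mul_ne_zero (mul_ne_zero (hfac (n+1)) (hpc n)) (hfac n))
        (mul_ne_zero (hfac (n+1)) (hpc n))]
      ring
    rw [e]
  -- RHS rewrite
  have hterm : ∀ k : ℕ,
      (1-w) * (pochC ((a+1)/2) k * pochC ((b+1)/2) k * pochC 1 k /
        (pochC 2 k * pochC ((a+b+1)/2) k * (k.factorial : ℂ)) * (4*w*(1-w))^k)
      = ∑' j : ℕ, S5.Phi a b k * (-1:ℂ)^j * ((k+1).choose j : ℂ) * w^(k+j) := by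
    intro k
    rw [S5.poch_one, S5.poch_two]
    have e : pochC ((a+1)/2) k * pochC ((b+1)/2) k * (k.factorial : ℂ)
          / (((k+1).factorial : ℂ) * pochC ((a+b+1)/2) k * (k.factorial : ℂ))
        = pochC ((a+1)/2) k * pochC ((b+1)/2) k
          / (((k+1).factorial : ℂ) * pochC ((a+b+1)/2) k) := by
      rw [div_eq_div_iff
        (mul_ne_zero (mul_ne_zero (hfac (k+1)) (hpc k)) (hfac k))
        (mul_ne_zero (hfac (k+1)) (hpc k))]
      ring
    rw [e]
    rw [tsum_eq_sum (s := Finset.range (k+2)) (fun j hj => S5.rowvanish k j hj)]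
    have e1 : (1-w)^(k+1)
        = ∑ j ∈ Finset.range (k+2), (-1:ℂ)^j * w^j * ((k+1).choose j : ℂ) := by
      have h2 := add_pow (-w) 1 (k+1)
      rw [show (-w) + 1 = 1 - w from by ring] at h2
      rw [h2]
      refine Finset.sum_congr rfl fun j hj => ?_
      rw [neg_pow]
      ring
    have key : (1-w) * (pochC ((a+1)/2) k * pochC ((b+1)/2) k
          / (((k+1).factorial : ℂ) * pochC ((a+b+1)/2) k) * (4*w*(1-w))^k)
        = S5.Phi a b k * w^k * (1-w)^(k+1) := by
      rw [S5.Phi, mul_pow, mul_pow]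
      ring
    rw [key, e1, Finset.mul_sum]
    refine Finset.sum_congr rfl fun j hj => ?_
    rw [pow_add]
    ring
  have hR : (1-w) * F32 ((a+1)/2) ((b+1)/2) 1 2 ((a+b+1)/2) (4*w*(1-w))
      = ∑' n : ℕ, S5.Sc a b n * w^n := by
    rw [F32, ← tsum_mul_left, tsum_congr hterm]
    rw [← Summable.tsum_prod' hg (fun k => summable_of_ne_finset_zero
      (s := Finset.range (k+2)) (fun j hj => S5.rowvanish k j hj))]
    rw [S5.tsum_prod_antidiag hg]
    refine tsum_congr fun n => ?_
    rw [Finset.Nat.sum_antidiagonal_eq_sum_range_succ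
      (fun k j => S5.Phi a b k * (-1:ℂ)^j * ((k+1).choose j : ℂ) * w^(k+j)) n]
    rw [S5.Sc, Finset.sum_mul]
    refine Finset.sum_congr rfl fun k hk => ?_
    have hkn : k ≤ n := by
      have := Finset.mem_range.mp hk; omega
    have h1 : k + (n-k) = n := by omega
    rw [h1]
    have h2 : ((-1:ℂ))^(n-k) = (-1:ℂ)^(n+k) := by
      have h3 : n+k = (n-k) + 2*k := by omega
      rw [h3, pow_add, pow_mul]
      norm_num
    rw [h2]
    ring
  rw [hL, ← hR]
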